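/- Let e ∈ 𝓓, u = (p,q) = (x,s;y,t) ∈ ℝ⁴_≤ and r ∈ [s,t]. The function z ↦ e(p;(z,r)) + e((z,r)⁺;q) on {z : p ≤ (z,r) ≤ q} attains its supremum, has a rightmost maximizer z_u(r), and r ↦ z_u(r) is a continuous function on [s,t]. -/
import Mathlib


open Filter Set Topology MeasureTheory
open scoped ENNReal

noncomputable section

/-- The space-time (light-cone) partial order on `ℝ²`: `q ∈ ∨_p`. -/
def cle (p q : ℝ × ℝ) : Prop := |q.1 - p.1| ≤ q.2 - p.2

/-- `e(r⁺, q) := sup {e(r', q) : r' ∈ ∨_r \ {r}}` for `r ≠ q`, and `0` otherwise. -/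
def ePlus (e : ℝ × ℝ → ℝ × ℝ → ℝ) (r q : ℝ × ℝ) : ℝ :=
  if r = q then 0 else sSup ((fun r' => e r' q) '' {r' | cle r r' ∧ r' ≠ r})

/-- Membership in `𝓔`: non-negative upper semi-continuous functions on `ℝ⁴_≤`
(extended by `0` off `ℝ⁴_≤`) satisfying the generalized reverse triangle inequality. -/
structure IsE (e : ℝ × ℝ → ℝ × ℝ → ℝ) : Prop where
  nonneg : ∀ p q, 0 ≤ e p q
  usc : UpperSemicontinuous (fun u : (ℝ × ℝ) × (ℝ × ℝ) => e u.1 u.2)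
  zero_of_not_cle : ∀ p q, ¬ cle p q → e p q = 0
  triangle : ∀ p r q, cle p r → cle r q → e p r + ePlus e r q ≤ e p q

/-- Two point pairs `u, v ∈ ℝ⁴_≤` are disjoint if no `r` satisfies
`u.1 ≤ r ≤ u.2` and `v.1 ≤ r ≤ v.2` simultaneously. -/
def ptsDisjoint (u v : (ℝ × ℝ) × (ℝ × ℝ)) : Prop :=
  ¬ ∃ r : ℝ × ℝ, cle u.1 r ∧ cle r u.2 ∧ cle v.1 r ∧ cle r v.2

/-- `Θ(e, u) := J((y-x)/(t-s), e(u)/(t-s)) · (t-s)` for `u = (x,s;y,t)`. -/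
def ThetaPt (J : ℝ → ℝ → ℝ≥0∞) (e : ℝ × ℝ → ℝ × ℝ → ℝ) (u : (ℝ × ℝ) × (ℝ × ℝ)) : ℝ≥0∞ :=
  J ((u.2.1 - u.1.1) / (u.2.2 - u.1.2)) (e u.1 u.2 / (u.2.2 - u.1.2)) *
    ENNReal.ofReal (u.2.2 - u.1.2)

/-- The preliminary rate function `Θ(e)`: the supremum over countable collections of
pairwise disjoint non-degenerate points of the sums of `Θ(e, u_i)`. -/
def Theta (J : ℝ → ℝ → ℝ≥0∞) (e : ℝ × ℝ → ℝ × ℝ → ℝ) : ℝ≥0∞ :=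
  ⨆ (U : Set ((ℝ × ℝ) × (ℝ × ℝ))) (_ : U.Countable)
    (_ : ∀ u ∈ U, cle u.1 u.2 ∧ u.1.2 ≠ u.2.2)
    (_ : U.Pairwise ptsDisjoint), ∑' u : U, ThetaPt J e u.val

/-- Property A2 for the point-to-point rate function `J` (with `Fγ γ = F(γ,1)` the shape
function): joint convexity, continuity, vanishing below the shape function, and strict
monotonicity above it. -/
structure PropA2 (J : ℝ → ℝ → ℝ≥0∞) (Fγ : ℝ → ℝ) : Prop where
  cont : Continuous fun v : ℝ × ℝ => J v.1 v.2
  convex : ∀ a b γ₁ γ₂ x₁ x₂ : ℝ, 0 ≤ a → 0 ≤ b → a + b = 1 →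
    J (a * γ₁ + b * γ₂) (a * x₁ + b * x₂) ≤
      ENNReal.ofReal a * J γ₁ x₁ + ENNReal.ofReal b * J γ₂ x₂
  zero_of_le : ∀ γ x : ℝ, x ≤ Fγ γ → J γ x = 0
  strictMono : ∀ γ : ℝ, StrictMonoOn (J γ) (Ici (Fγ γ))

/-- The generalized metric composition law:
`e(x,s;y,t) = sup_{(x,s) ≤ (z,r) < (y,t)} e(x,s;z,r) + e((z,r)⁺;y,t)` for `s ≤ r < t`. -/
def MCL (e : ℝ × ℝ → ℝ × ℝ → ℝ) : Prop :=
  ∀ p q : ℝ × ℝ, ∀ r : ℝ, cle p q → p.2 ≤ r → r < q.2 →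
    e p q = sSup {v : ℝ | ∃ z : ℝ, cle p (z, r) ∧ cle (z, r) q ∧ (z, r) ≠ q ∧
      v = e p (z, r) + ePlus e (z, r) q}

/-- Membership in `𝓓`, the set of finite rate metrics: `e ∈ 𝓔`, `d`-dominant (`e ≥ d` where
`d(p,q) = F(q-p)`), `Θ(e) < ∞`, and the generalized metric composition law. -/
structure InD (J : ℝ → ℝ → ℝ≥0∞) (F : ℝ × ℝ → ℝ) (e : ℝ × ℝ → ℝ × ℝ → ℝ) : Prop where
  isE : IsE e
  dom : ∀ p q : ℝ × ℝ, cle p q → F (q - p) ≤ e p q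
  thetaFin : Theta J e ≠ ⊤
  mcl : MCL e

/-- A countable collection of pairwise disjoint closed subintervals of `[s,t]` of mesh `≤ ε`. -/
def MeshOK (s t ε : ℝ) (P : Set (ℝ × ℝ)) : Prop :=
  P.Countable ∧ (∀ I ∈ P, s ≤ I.1 ∧ I.1 ≤ I.2 ∧ I.2 ≤ t ∧ I.2 - I.1 ≤ ε) ∧
    P.Pairwise fun I I' => I.2 < I'.1 ∨ I'.2 < I.1

/-- The rate `I(e,γ)` of a path `γ : [s,t] → ℝ`: the fine-mesh supremum of sums of `Θ` over
countable collections of disjoint closed subintervals. -/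
def pathRate (J : ℝ → ℝ → ℝ≥0∞) (e : ℝ × ℝ → ℝ × ℝ → ℝ) (s t : ℝ) (γ : ℝ → ℝ) : ℝ≥0∞ :=
  ⨅ (ε : ℝ) (_ : 0 < ε), ⨆ (P : Set (ℝ × ℝ)) (_ : MeshOK s t ε P),
    ∑' I : P, ThetaPt J e ((γ I.val.1, I.val.1), (γ I.val.2, I.val.2))

/-- A directed (closed) path in `ℝ⁴_≤`. -/
structure DirPath where
  s : ℝ
  t : ℝ
  f : ℝ → ℝ
  hle : s ≤ t
  dir : ∀ a b : ℝ, s ≤ a → a ≤ b → b ≤ t → |f b - f a| ≤ b - a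

/-- A network: a collection of paths that are pairwise disjoint (never equal at a common
time). -/
def NetDisjoint (Γ : Set DirPath) : Prop :=
  ∀ γ ∈ Γ, ∀ γ' ∈ Γ, γ ≠ γ' → ∀ r : ℝ,
    γ.s ≤ r → r ≤ γ.t → γ'.s ≤ r → r ≤ γ'.t → γ.f r ≠ γ'.f r

/-- The network rate function `I(e) = sup_Γ Σ_{γ ∈ Γ} I(e,γ)` over countable networks. -/
def rateI (J : ℝ → ℝ → ℝ≥0∞) (e : ℝ × ℝ → ℝ × ℝ → ℝ) : ℝ≥0∞ :=
  ⨆ (Γ : Set DirPath) (_ : Γ.Countable) (_ : NetDisjoint Γ),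
    ∑' γ : Γ, pathRate J e γ.val.s γ.val.t γ.val.f

section stmt13aux

private lemma cle_mk {a b : ℝ × ℝ} (h1 : b.1 - a.1 ≤ b.2 - a.2) (h2 : a.1 - b.1 ≤ b.2 - a.2) :
    cle a b := by
  rw [cle, abs_le]; constructor <;> linarith

private lemma cle_elim {a b : ℝ × ℝ} (h : cle a b) :
    b.1 - a.1 ≤ b.2 - a.2 ∧ a.1 - b.1 ≤ b.2 - a.2 := by
  rw [cle, abs_le] at h; exact ⟨h.2, by linarith [h.1]⟩

private lemma cle_refl (a : ℝ × ℝ) : cle a a := by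
  rw [cle]; simp

private lemma cle_trans {a b c : ℝ × ℝ} (h1 : cle a b) (h2 : cle b c) : cle a c := by
  obtain ⟨x1, y1⟩ := cle_elim h1
  obtain ⟨x2, y2⟩ := cle_elim h2
  exact cle_mk (by linarith) (by linarith)

private lemma cle_le2 {a b : ℝ × ℝ} (h : cle a b) : a.2 ≤ b.2 := by
  obtain ⟨x1, y1⟩ := cle_elim h; linarith

private lemma cle_same_level {a b : ℝ × ℝ} (h : cle a b) (h2 : b.2 ≤ a.2) : a = b := by
  obtain ⟨x1, y1⟩ := cle_elim h
  have : a.1 = b.1 := by linarith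
  have h22 : a.2 = b.2 := le_antisymm (cle_le2 h) h2
  exact Prod.ext this h22

private lemma cle_interp {a b : ℝ × ℝ} {l : ℝ} (h : cle a b) (h1 : a.2 ≤ l) (h2 : l ≤ b.2) :
    ∃ w : ℝ, cle a (w, l) ∧ cle (w, l) b := by
  rcases eq_or_lt_of_le (cle_le2 h) with hd | hd
  · -- degenerate
    have hl : l = a.2 := le_antisymm (hd ▸ h2) h1
    have hab : a = b := cle_same_level h hd.ge
    refine ⟨a.1, ?_, ?_⟩
    · have : (a.1, l) = a := by rw [hl]
      rw [this]; exact cle_refl a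
    · have : (a.1, l) = a := by rw [hl]
      rw [this, hab]; exact cle_refl b
  · set d : ℝ := b.2 - a.2 with hdd
    have hd0 : 0 < d := by simp [hdd]; linarith
    set θ : ℝ := (l - a.2) / d with hθ
    have hθ0 : 0 ≤ θ := div_nonneg (by linarith) hd0.le
    have hθ1 : θ ≤ 1 := by
      rw [hθ, div_le_one hd0]; simp [hdd]; linarith
    obtain ⟨x1, y1⟩ := cle_elim h
    refine ⟨a.1 + θ * (b.1 - a.1), ?_, ?_⟩
    · refine cle_mk ?_ ?_ <;> simp only
      · have : θ * (b.1 - a.1) ≤ θ * d := by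
          apply mul_le_mul_of_nonneg_left _ hθ0; linarith
        have hθd : θ * d = l - a.2 := by rw [hθ]; field_simp
        linarith
      · have : θ * (a.1 - b.1) ≤ θ * d := by
          apply mul_le_mul_of_nonneg_left _ hθ0; linarith
        have hθd : θ * d = l - a.2 := by rw [hθ]; field_simp
        nlinarith
    · have hc : (1 - θ) * d = b.2 - l := by
        rw [hθ]; field_simp; ring
      have h1θ : 0 ≤ 1 - θ := by linarith
      refine cle_mk ?_ ?_ <;> simp only
      · have : (1 - θ) * (b.1 - a.1) ≤ (1 - θ) * d := by
          apply mul_le_mul_of_nonneg_left _ h1θ; linarith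
        nlinarith
      · have : (1 - θ) * (a.1 - b.1) ≤ (1 - θ) * d := by
          apply mul_le_mul_of_nonneg_left _ h1θ; linarith
        nlinarith

private lemma cle_closed_limit {u v : ℕ → ℝ × ℝ} {A B : ℝ × ℝ}
    (hu : Filter.Tendsto u Filter.atTop (nhds A)) (hv : Filter.Tendsto v Filter.atTop (nhds B))
    (h : ∀ n, cle (u n) (v n)) : cle A B := by
  have h1 : Filter.Tendsto (fun n => (v n).1 - (u n).1) Filter.atTop (nhds (B.1 - A.1)) :=
    ((continuous_fst.tendsto B).comp hv).sub ((continuous_fst.tendsto A).comp hu)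
  have h2 : Filter.Tendsto (fun n => (v n).2 - (u n).2) Filter.atTop (nhds (B.2 - A.2)) :=
    ((continuous_snd.tendsto B).comp hv).sub ((continuous_snd.tendsto A).comp hu)
  refine cle_mk ?_ ?_
  · exact le_of_tendsto_of_tendsto' h1 h2 (fun n => (cle_elim (h n)).1)
  · have h1' : Filter.Tendsto (fun n => (u n).1 - (v n).1) Filter.atTop (nhds (A.1 - B.1)) :=
      ((continuous_fst.tendsto A).comp hu).sub ((continuous_fst.tendsto B).comp hv)
    exact le_of_tendsto_of_tendsto' h1' h2 (fun n => (cle_elim (h n)).2)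

end stmt13aux
section stmt13aux2
variable {e : ℝ × ℝ → ℝ × ℝ → ℝ}

private lemma isClosed_cle_left (P : ℝ × ℝ) : IsClosed {τ : ℝ × ℝ | cle P τ} := by
  have : {τ : ℝ × ℝ | cle P τ} = {τ : ℝ × ℝ | |τ.1 - P.1| ≤ τ.2 - P.2} := rfl
  rw [this]
  exact isClosed_le ((continuous_fst.sub continuous_const).abs)
    (continuous_snd.sub continuous_const)

private lemma isClosed_cle_right (c : ℝ × ℝ) : IsClosed {τ : ℝ × ℝ | cle τ c} := by
  have : {τ : ℝ × ℝ | cle τ c} = {τ : ℝ × ℝ | |c.1 - τ.1| ≤ c.2 - τ.2} := rfl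
  rw [this]
  exact isClosed_le ((continuous_const.sub continuous_fst).abs)
    (continuous_const.sub continuous_snd)

private lemma isCompact_orderInt (P c : ℝ × ℝ) :
    IsCompact {τ : ℝ × ℝ | cle P τ ∧ cle τ c} := by
  have hsub : {τ : ℝ × ℝ | cle P τ ∧ cle τ c} ⊆
      (Set.Icc (P.1 - (c.2 - P.2)) (P.1 + (c.2 - P.2))) ×ˢ (Set.Icc P.2 c.2) := by
    rintro τ ⟨h1, h2⟩
    obtain ⟨a1, a2⟩ := cle_elim h1
    obtain ⟨b1, b2⟩ := cle_elim h2
    refine ⟨?_, ⟨cle_le2 h1, cle_le2 h2⟩⟩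
    simp only [Set.mem_Icc]
    constructor <;> linarith
  exact ((isCompact_Icc).prod (isCompact_Icc)).of_isClosed_subset
    ((isClosed_cle_left P).inter (isClosed_cle_right c)) hsub

private lemma usc_ev (hE : IsE e) {a b : ℕ → ℝ × ℝ} {A B : ℝ × ℝ}
    (ha : Filter.Tendsto a Filter.atTop (nhds A)) (hb : Filter.Tendsto b Filter.atTop (nhds B))
    {ε : ℝ} (hε : 0 < ε) : ∀ᶠ n in Filter.atTop, e (a n) (b n) < e A B + ε := by
  have h1 : Filter.Tendsto (fun n => (a n, b n)) Filter.atTop (nhds (A, B)) :=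
    ha.prodMk_nhds hb
  have := hE.usc (A, B) (e A B + ε) (by simp [hε])
  exact h1.eventually this

private lemma usc_bdd_compact (hE : IsE e) {s : Set ((ℝ × ℝ) × (ℝ × ℝ))} (hs : IsCompact s) :
    BddAbove ((fun u : (ℝ × ℝ) × (ℝ × ℝ) => e u.1 u.2) '' s) := by
  by_contra hb
  rw [not_bddAbove_iff] at hb
  have hex : ∀ n : ℕ, ∃ u : (ℝ × ℝ) × (ℝ × ℝ), u ∈ s ∧ (n : ℝ) < e u.1 u.2 := by
    intro n
    obtain ⟨y, ⟨u, hu, rfl⟩, hy⟩ := hb (n : ℝ)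
    exact ⟨u, hu, hy⟩
  choose f hf1 hf2 using hex
  obtain ⟨a, ha, φ, hφ, hconv⟩ := hs.tendsto_subseq hf1
  have hev : ∀ᶠ k in Filter.atTop,
      e ((f ∘ φ) k).1 ((f ∘ φ) k).2 < e a.1 a.2 + 1 := by
    have := hE.usc a (e a.1 a.2 + 1) (by simp)
    exact hconv.eventually this
  have hbig : ∀ᶠ k in Filter.atTop, e a.1 a.2 + 1 < e ((f ∘ φ) k).1 ((f ∘ φ) k).2 := by
    have hnat : ∀ᶠ k : ℕ in Filter.atTop, e a.1 a.2 + 1 < (k : ℝ) :=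
      Filter.Tendsto.eventually_gt_atTop tendsto_natCast_atTop_atTop _
    filter_upwards [hnat] with k hk
    calc e a.1 a.2 + 1 < (k : ℝ) := hk
      _ ≤ (φ k : ℝ) := by exact_mod_cast Nat.cast_le.mpr (hφ.le_apply)
      _ < e (f (φ k)).1 (f (φ k)).2 := hf2 (φ k)
  obtain ⟨k, h1, h2⟩ := (hev.and hbig).exists
  exact absurd (h1.trans h2) (lt_irrefl _)

private lemma ePlus_bdd (hE : IsE e) (P c : ℝ × ℝ) :
    BddAbove ((fun τ => e τ c) '' {τ | cle P τ ∧ τ ≠ P}) := by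
  obtain ⟨C, hC⟩ := usc_bdd_compact hE
    ((isCompact_orderInt P c).prod (isCompact_singleton (x := c)))
  refine ⟨max C 0, ?_⟩
  rintro y ⟨τ, ⟨h1, _⟩, rfl⟩
  by_cases h2 : cle τ c
  · refine le_max_of_le_left (hC ⟨(τ, c), ⟨⟨h1, h2⟩, Set.mem_singleton c⟩, rfl⟩)
  · show e τ c ≤ max C 0
    rw [hE.zero_of_not_cle τ c h2]; exact le_max_right _ _

private lemma ePlus_ne {P c : ℝ × ℝ} (h : P ≠ c) :
    ePlus e P c = sSup ((fun τ => e τ c) '' {τ | cle P τ ∧ τ ≠ P}) := by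
  rw [ePlus, if_neg h]

private lemma ePlus_le_elem (hE : IsE e) {P τ c : ℝ × ℝ} (h1 : cle P τ) (h2 : τ ≠ P)
    (h3 : P ≠ c) : e τ c ≤ ePlus e P c := by
  rw [ePlus_ne h3]
  exact le_csSup (ePlus_bdd hE P c) ⟨τ, ⟨h1, h2⟩, rfl⟩

private lemma ePlus_nonneg (hE : IsE e) (P c : ℝ × ℝ) : 0 ≤ ePlus e P c := by
  by_cases h : P = c
  · rw [ePlus, if_pos h]
  · set τ : ℝ × ℝ := (P.1, max P.2 c.2 + 1) with hτ
    have h1 : cle P τ := by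
      refine cle_mk ?_ ?_ <;> simp [hτ] <;> linarith [le_max_left P.2 c.2]
    have h2 : τ ≠ P := by
      intro hh
      have := congrArg Prod.snd hh
      simp [hτ] at this
      linarith [le_max_left P.2 c.2]
    have h3 : ¬ cle τ c := by
      intro hc
      have := cle_le2 hc
      simp [hτ] at this
      linarith [le_max_right P.2 c.2]
    have := ePlus_le_elem hE h1 h2 h
    rw [hE.zero_of_not_cle τ c h3] at this
    exact this

end stmt13aux2
section stmt13aux3
variable {e : ℝ × ℝ → ℝ × ℝ → ℝ}

/-- E1: stripping the left endpoint. -/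
private lemma ePlus_left (hmcl : MCL e) {a b : ℝ × ℝ} (hab : cle a b) (h2 : a.2 < b.2) :
    e a b = e a a + ePlus e a b := by
  have hne : ((a.1 : ℝ), a.2) ≠ b := by
    intro h
    have := congrArg Prod.snd h
    simp at this; exact absurd this (ne_of_lt h2)
  have h := hmcl a b a.2 hab le_rfl h2
  have hset : {v : ℝ | ∃ z : ℝ, cle a (z, a.2) ∧ cle (z, a.2) b ∧ (z, a.2) ≠ b ∧
      v = e a (z, a.2) + ePlus e (z, a.2) b} = {e a a + ePlus e a b} := by
    ext v
    simp only [Set.mem_setOf_eq, Set.mem_singleton_iff]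
    constructor
    · rintro ⟨z, hz1, _, _, rfl⟩
      have hz : z = a.1 := by
        obtain ⟨u1, u2⟩ := cle_elim hz1
        simp only at u1 u2
        linarith
      subst hz
      rw [show ((a.1 : ℝ), a.2) = a from rfl]
    · rintro rfl
      refine ⟨a.1, ?_, ?_, ?_, ?_⟩
      · rw [show ((a.1 : ℝ), a.2) = a from rfl]; exact cle_refl a
      · rw [show ((a.1 : ℝ), a.2) = a from rfl]; exact hab
      · exact hne
      · rw [show ((a.1 : ℝ), a.2) = a from rfl]
  rw [hset] at h
  rw [h, csSup_singleton]

private lemma ePlus_le_self (hE : IsE e) (hmcl : MCL e) {a b : ℝ × ℝ} (hab : cle a b) :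
    ePlus e a b ≤ e a b := by
  by_cases h : a = b
  · rw [ePlus, if_pos h]; exact hE.nonneg a b
  · have h2 : a.2 < b.2 := by
      rcases lt_or_ge a.2 b.2 with h' | h'
      · exact h'
      · exact absurd (cle_same_level hab h') h
    rw [ePlus_left hmcl hab h2]
    linarith [hE.nonneg a a]

/-- MCL approximate witness. -/
private lemma mcl_witness (hmcl : MCL e) {a b : ℝ × ℝ} {l δ : ℝ} (hab : cle a b)
    (h1 : a.2 ≤ l) (h2 : l < b.2) (hδ : 0 < δ) :
    ∃ w : ℝ, cle a (w, l) ∧ cle (w, l) b ∧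
      e a b - δ < e a (w, l) + ePlus e (w, l) b := by
  have h := hmcl a b l hab h1 h2
  obtain ⟨w0, hw1, hw2⟩ := cle_interp hab h1 h2.le
  have hne : ((w0 : ℝ), l) ≠ b := by
    intro hh
    have := congrArg Prod.snd hh
    simp at this; exact absurd this (ne_of_lt h2)
  have hnonempty : {v : ℝ | ∃ z : ℝ, cle a (z, l) ∧ cle (z, l) b ∧ (z, l) ≠ b ∧
      v = e a (z, l) + ePlus e (z, l) b}.Nonempty :=
    ⟨_, w0, hw1, hw2, hne, rfl⟩
  have hlt : e a b - δ < sSup {v : ℝ | ∃ z : ℝ, cle a (z, l) ∧ cle (z, l) b ∧ (z, l) ≠ b ∧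
      v = e a (z, l) + ePlus e (z, l) b} := by
    rw [← h]; linarith
  obtain ⟨v, hv, hvlt⟩ := exists_lt_of_lt_csSup hnonempty hlt
  obtain ⟨z, hz1, hz2, _, rfl⟩ := hv
  exact ⟨z, hz1, hz2, hvlt⟩

/-- superadditivity of ePlus along a chain. -/
private lemma ePlus_superadd (hE : IsE e) {a b c : ℝ × ℝ} (hab : cle a b) (hbc : cle b c) :
    ePlus e a b + ePlus e b c ≤ ePlus e a c := by
  by_cases hab' : a = b
  · subst hab'
    rw [ePlus, if_pos rfl, zero_add]
  by_cases hbc' : b = c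
  · subst hbc'
    have : ePlus e b b = 0 := by rw [ePlus, if_pos rfl]
    rw [this, add_zero]
  have hac' : a ≠ c := by
    intro h
    subst h
    have : a.2 ≤ b.2 := cle_le2 hab
    have : b.2 ≤ a.2 := cle_le2 hbc
    exact hab' (cle_same_level hab (by linarith))
  -- monotonicity part : ePlus b c ≤ ePlus a c
  have hmono : ePlus e b c ≤ ePlus e a c := by
    rw [ePlus_ne hbc']
    apply csSup_le
    · refine ⟨e (b.1, b.2 + 1) c, (b.1, b.2 + 1), ⟨?_, ?_⟩, rfl⟩
      · exact cle_mk (by simp) (by simp)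
      · intro hh; have := congrArg Prod.snd hh; simp at this
    · rintro y ⟨σ, ⟨hσ1, hσ2⟩, rfl⟩
      refine ePlus_le_elem hE (cle_trans hab hσ1) ?_ hac'
      intro hh
      subst hh
      exact hab' (cle_same_level hab (cle_le2 hσ1))
  rw [ePlus_ne hab']
  rw [show sSup ((fun τ => e τ b) '' {τ | cle a τ ∧ τ ≠ a}) + ePlus e b c
      = sSup ((fun τ => e τ b) '' {τ | cle a τ ∧ τ ≠ a}) - (- ePlus e b c) from by ring]
  rw [sub_le_iff_le_add]
  apply csSup_le
  · refine ⟨e (a.1, a.2 + 1) b, (a.1, a.2 + 1), ⟨?_, ?_⟩, rfl⟩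
    · exact cle_mk (by simp) (by simp)
    · intro hh; have := congrArg Prod.snd hh; simp at this
  · rintro y ⟨τ, ⟨hτ1, hτ2⟩, rfl⟩
    simp only
    by_cases hτb : cle τ b
    · have := hE.triangle τ b c hτb hbc
      have h2 := ePlus_le_elem hE hτ1 hτ2 hac'
      linarith
    · rw [hE.zero_of_not_cle τ b hτb]
      linarith [hmono]

/-- Gmax : F1 bound. -/
private lemma Ghat_le (hE : IsE e) {p P q : ℝ × ℝ} (h1 : cle p P) (h2 : cle P q) :
    e p P + ePlus e P q ≤ e p q := hE.triangle p P q h1 h2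

end stmt13aux3
section stmt13aux4

/-- `Ĝ(Q) = e(p;Q) + e(Q⁺;q)`. -/
private def Gh (e : ℝ × ℝ → ℝ × ℝ → ℝ) (p q Q : ℝ × ℝ) : ℝ := e p Q + ePlus e Q q

/-- The set of asymptotic maximizers of `Ĝ` in the order interval `[p,q]`. -/
private def Kset (e : ℝ × ℝ → ℝ × ℝ → ℝ) (p q : ℝ × ℝ) : Set (ℝ × ℝ) :=
  {Q | cle p Q ∧ cle Q q ∧ ∀ ε > (0 : ℝ), ∀ δ > (0 : ℝ), ∃ Q' : ℝ × ℝ,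
    dist Q' Q < δ ∧ cle p Q' ∧ cle Q' q ∧ e p q - ε < Gh e p q Q'}

variable {e : ℝ × ℝ → ℝ × ℝ → ℝ} {p q : ℝ × ℝ}

private lemma one_div_succ_pos (n : ℕ) : (0 : ℝ) < 1 / (n + 1) := by positivity

private lemma one_div_succ_le {k m : ℕ} (h : k ≤ m) :
    (1 : ℝ) / (m + 1) ≤ 1 / (k + 1) := by
  apply one_div_le_one_div_of_le (by positivity)
  have : (k : ℝ) ≤ m := by exact_mod_cast h
  linarith

private lemma Ghat_le_M (hE : IsE e) {Q : ℝ × ℝ} (h1 : cle p Q) (h2 : cle Q q) :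
    Gh e p q Q ≤ e p q := hE.triangle p Q q h1 h2

private lemma Kmem_of_seq {Q : ℕ → ℝ × ℝ} {Qs : ℝ × ℝ}
    (hconv : Filter.Tendsto Q Filter.atTop (nhds Qs))
    (h1 : ∀ n, cle p (Q n)) (h2 : ∀ n, cle (Q n) q)
    (h3 : ∀ n, e p q - 1 / (n + 1) < Gh e p q (Q n)) : Qs ∈ Kset e p q := by
  refine ⟨cle_closed_limit tendsto_const_nhds hconv (fun n => h1 n),
          cle_closed_limit hconv tendsto_const_nhds (fun n => h2 n), ?_⟩
  intro ε hε δ hδ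
  obtain ⟨n0, hn0⟩ := exists_nat_one_div_lt hε
  obtain ⟨N, hN⟩ := Metric.tendsto_atTop.mp hconv δ hδ
  set m := max n0 N with hm
  refine ⟨Q m, hN m (le_max_right _ _), h1 m, h2 m, ?_⟩
  have hles : (1 : ℝ) / (m + 1) ≤ 1 / (n0 + 1) := one_div_succ_le (le_max_left _ _)
  have := h3 m
  linarith

private lemma Kmem_of_max {Q : ℝ × ℝ} (h1 : cle p Q) (h2 : cle Q q)
    (h3 : e p q ≤ Gh e p q Q) : Q ∈ Kset e p q := by
  refine ⟨h1, h2, ?_⟩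
  intro ε hε δ hδ
  exact ⟨Q, by simpa using hδ, h1, h2, by linarith⟩

private lemma Kset_orderInt {Q : ℝ × ℝ} (h : Q ∈ Kset e p q) : cle p Q ∧ cle Q q :=
  ⟨h.1, h.2.1⟩

private lemma Kset_isClosed : IsClosed (Kset e p q) := by
  apply IsSeqClosed.isClosed
  intro x a hx ha
  refine ⟨cle_closed_limit tendsto_const_nhds ha (fun n => (hx n).1),
          cle_closed_limit ha tendsto_const_nhds (fun n => (hx n).2.1), ?_⟩
  intro ε hε δ hδ
  obtain ⟨N, hN⟩ := Metric.tendsto_atTop.mp ha (δ / 2) (by linarith)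
  obtain ⟨Q', hd, hc1, hc2, hval⟩ := (hx N).2.2 ε hε (δ / 2) (by linarith)
  refine ⟨Q', ?_, hc1, hc2, hval⟩
  calc dist Q' a ≤ dist Q' (x N) + dist (x N) a := dist_triangle _ _ _
    _ < δ / 2 + δ / 2 := by have := hN N le_rfl; linarith
    _ = δ := by ring

/-- The key three-point splitting across a `K`-point. -/
private lemma HL_step (hE : IsE e) (hmcl : MCL e) (hpq : cle p q)
    {Qs : ℝ × ℝ} (hK : Qs ∈ Kset e p q) {l m : ℝ}
    (hl1 : p.2 ≤ l) (hl2 : l < Qs.2) (hm1 : Qs.2 < m) (hm2 : m < q.2)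
    {ε : ℝ} (hε : 0 < ε) :
    ∃ u v : ℝ × ℝ, cle p u ∧ cle u Qs ∧ u.2 = l ∧ cle Qs v ∧ cle v q ∧ v.2 = m ∧
      e p q < e p u + e u v + e v q + ε := by
  set δg : ℝ := min (Qs.2 - l) (m - Qs.2) with hδg
  have hδg0 : 0 < δg := by
    apply lt_min <;> linarith
  -- choose the approximating points
  have hex : ∀ n : ℕ, ∃ Q' : ℝ × ℝ, dist Q' Qs < min (1 / ((n : ℝ) + 1)) δg ∧ cle p Q' ∧
      cle Q' q ∧ e p q - 1 / ((n : ℝ) + 1) < Gh e p q Q' := by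
    intro n
    exact hK.2.2 (1 / ((n : ℝ) + 1)) (one_div_succ_pos n) _ (lt_min (one_div_succ_pos n) hδg0)
  choose Q hQd hQ1 hQ2 hQv using hex
  have hQ2lt : ∀ n, l < (Q n).2 ∧ (Q n).2 < m := by
    intro n
    have h1 : |(Q n).2 - Qs.2| ≤ dist (Q n) Qs := by
      rw [Prod.dist_eq, Real.dist_eq]
      exact le_max_right _ _
    have h2 : dist (Q n) Qs < δg := lt_of_lt_of_le (hQd n) (min_le_right _ _)
    rw [abs_le] at h1
    constructor <;>
      [have := min_le_left (Qs.2 - l) (m - Qs.2); have := min_le_right (Qs.2 - l) (m - Qs.2)] <;>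
      linarith [h1.1, h1.2]
  have hQconv : Filter.Tendsto Q Filter.atTop (nhds Qs) := by
    rw [tendsto_iff_dist_tendsto_zero]
    apply squeeze_zero (fun n => dist_nonneg)
      (fun n => ((hQd n).trans_le (min_le_left _ _)).le)
    exact tendsto_one_div_add_atTop_nhds_zero_nat
  -- witnesses below and above
  have hwit1 : ∀ n : ℕ, ∃ w : ℝ, cle p (w, l) ∧ cle (w, l) (Q n) ∧
      e p (Q n) - 1 / (n + 1) < e p (w, l) + ePlus e (w, l) (Q n) :=
    fun n => mcl_witness hmcl (hQ1 n) hl1 (hQ2lt n).1 (one_div_succ_pos n)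
  have hwit2 : ∀ n : ℕ, ∃ w : ℝ, cle (Q n) (w, m) ∧ cle (w, m) q ∧
      e (Q n) q - 1 / (n + 1) < e (Q n) (w, m) + ePlus e (w, m) q :=
    fun n => mcl_witness hmcl (hQ2 n) (hQ2lt n).2.le hm2 (one_div_succ_pos n)
  choose w1 hw11 hw12 hw13 using hwit1
  choose w2 hw21 hw22 hw23 using hwit2
  -- the per-n inequality
  have hchain : ∀ n : ℕ, e p q < e p (w1 n, l) + e (w1 n, l) (w2 n, m) + e (w2 n, m) q
      + 3 * (1 / (n + 1)) := by
    intro n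
    have hE1q : e (Q n) q = e (Q n) (Q n) + ePlus e (Q n) q :=
      ePlus_left hmcl (hQ2 n) (lt_trans (hQ2lt n).2 hm2)
    have hE1v : e (Q n) (w2 n, m) = e (Q n) (Q n) + ePlus e (Q n) (w2 n, m) :=
      ePlus_left hmcl (hw21 n) (hQ2lt n).2
    have hsup : ePlus e (w1 n, l) (Q n) + ePlus e (Q n) (w2 n, m) ≤
        ePlus e (w1 n, l) (w2 n, m) := ePlus_superadd hE (hw12 n) (hw21 n)
    have hles1 : ePlus e (w1 n, l) (w2 n, m) ≤ e (w1 n, l) (w2 n, m) :=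
      ePlus_le_self hE hmcl (cle_trans (hw12 n) (hw21 n))
    have hles2 : ePlus e (w2 n, m) q ≤ e (w2 n, m) q :=
      ePlus_le_self hE hmcl (hw22 n)
    have hGh : e p q - 1 / (n + 1) < e p (Q n) + ePlus e (Q n) q := hQv n
    have h13 := hw13 n
    have h23 := hw23 n
    linarith
  -- compactness and limits
  have hbd1 : ∀ n, w1 n ∈ Set.Icc (p.1 - (l - p.2)) (p.1 + (l - p.2)) := by
    intro n
    obtain ⟨a1, a2⟩ := cle_elim (hw11 n)
    simp only at a1 a2
    simp only [Set.mem_Icc]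
    constructor <;> linarith
  obtain ⟨w1s, _, φ1, hφ1, hc1⟩ := (isCompact_Icc).tendsto_subseq hbd1
  have hbd2 : ∀ k, w2 (φ1 k) ∈ Set.Icc (Qs.1 - (m - l + 1)) (Qs.1 + (m - l + 1)) := by
    intro k
    obtain ⟨a1, a2⟩ := cle_elim (hw21 (φ1 k))
    simp only at a1 a2
    have hd : |(Q (φ1 k)).1 - Qs.1| ≤ dist (Q (φ1 k)) Qs := by
      rw [Prod.dist_eq, Real.dist_eq]
      exact le_max_left _ _
    have hd2 : dist (Q (φ1 k)) Qs < 1 := by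
      have := (hQd (φ1 k)).trans_le (min_le_left _ _)
      have h2 := one_div_succ_le (Nat.zero_le (φ1 k))
      simp only [Nat.cast_zero, zero_add] at h2
      linarith
    rw [abs_le] at hd
    have hl2' := (hQ2lt (φ1 k)).1
    have hm2' := (hQ2lt (φ1 k)).2
    simp only [Set.mem_Icc]
    constructor <;> linarith [hd.1, hd.2]
  obtain ⟨w2s, _, φ2, hφ2, hc2⟩ := (isCompact_Icc).tendsto_subseq hbd2
  set φ : ℕ → ℕ := φ1 ∘ φ2 with hφdef
  have hφmono : StrictMono φ := hφ1.comp hφ2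
  have hc1' : Filter.Tendsto (fun k => w1 (φ k)) Filter.atTop (nhds w1s) :=
    hc1.comp hφ2.tendsto_atTop
  have hQconv' : Filter.Tendsto (fun k => Q (φ k)) Filter.atTop (nhds Qs) :=
    hQconv.comp hφmono.tendsto_atTop
  set u : ℕ → ℝ × ℝ := fun k => (w1 (φ k), l) with hu
  set v : ℕ → ℝ × ℝ := fun k => (w2 (φ k), m) with hv
  have huconv : Filter.Tendsto u Filter.atTop (nhds (w1s, l)) :=
    hc1'.prodMk_nhds tendsto_const_nhds
  have hvconv : Filter.Tendsto v Filter.atTop (nhds (w2s, m)) :=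
    hc2.prodMk_nhds tendsto_const_nhds
  refine ⟨(w1s, l), (w2s, m), ?_, ?_, rfl, ?_, ?_, rfl, ?_⟩
  · exact cle_closed_limit tendsto_const_nhds huconv (fun k => hw11 (φ k))
  · exact cle_closed_limit huconv hQconv' (fun k => hw12 (φ k))
  · exact cle_closed_limit hQconv' hvconv (fun k => hw21 (φ k))
  · exact cle_closed_limit hvconv tendsto_const_nhds (fun k => hw22 (φ k))
  · -- pass to the limit in hchain
    have hε4 : 0 < ε / 4 := by linarith
    have hev1 : ∀ᶠ k in Filter.atTop, e p (u k) < e p (w1s, l) + ε / 4 :=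
      usc_ev hE tendsto_const_nhds huconv hε4
    have hev2 : ∀ᶠ k in Filter.atTop, e (u k) (v k) < e (w1s, l) (w2s, m) + ε / 4 :=
      usc_ev hE huconv hvconv hε4
    have hev3 : ∀ᶠ k in Filter.atTop, e (v k) q < e (w2s, m) q + ε / 4 :=
      usc_ev hE hvconv tendsto_const_nhds hε4
    obtain ⟨n0, hn0⟩ := exists_nat_one_div_lt (show (0:ℝ) < ε / 12 by linarith)
    have hev4 : ∀ᶠ k in Filter.atTop, (k : ℕ) ≥ n0 := Filter.eventually_ge_atTop n0
    obtain ⟨k, hk⟩ := (((hev1.and hev2).and hev3).and hev4).exists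
    obtain ⟨⟨⟨h1, h2⟩, h3⟩, h4⟩ := hk
    have hsmall : 3 * ((1 : ℝ) / (φ k + 1)) < ε / 4 := by
      have hk1 : (1 : ℝ) / (φ k + 1) ≤ 1 / (k + 1) := one_div_succ_le hφmono.le_apply
      have hk2 : (1 : ℝ) / (k + 1) ≤ 1 / (n0 + 1) := one_div_succ_le h4
      have : (1 : ℝ) / (φ k + 1) < ε / 12 := by linarith
      linarith
    have := hchain (φ k)
    have hfin : e p q < e p (w1s, l) + e (w1s, l) (w2s, m) + e (w2s, m) q + ε := by
      simp only [hu, hv] at h1 h2 h3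
      linarith
    exact hfin

end stmt13aux4
section stmt13aux5
variable {e : ℝ × ℝ → ℝ × ℝ → ℝ} {p q : ℝ × ℝ}

private lemma Kmem_limit_level {w : ℕ → ℝ} {l A B : ℝ}
    (hbd : ∀ n, w n ∈ Set.Icc A B)
    (h1 : ∀ n, cle p (w n, l)) (h2 : ∀ n, cle (w n, l) q)
    (h3 : ∀ n : ℕ, e p q - 1 / ((n : ℝ) + 1) < Gh e p q (w n, l)) :
    ∃ ws : ℝ, (ws, l) ∈ Kset e p q ∧ ∃ φ : ℕ → ℕ, StrictMono φ ∧
      Filter.Tendsto (fun k => w (φ k)) Filter.atTop (nhds ws) := by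
  obtain ⟨ws, _, φ, hφ, hc⟩ := (isCompact_Icc).tendsto_subseq hbd
  have hc' : Filter.Tendsto (fun k => w (φ k)) Filter.atTop (nhds ws) := hc
  refine ⟨ws, ?_, φ, hφ, hc'⟩
  have hconv : Filter.Tendsto (fun k => ((w (φ k) : ℝ), l)) Filter.atTop (nhds (ws, l)) :=
    hc'.prodMk_nhds tendsto_const_nhds
  exact Kmem_of_seq hconv (fun k => h1 (φ k)) (fun k => h2 (φ k))
    (fun k => by
      have ha := h3 (φ k)
      have hb := one_div_succ_le (hφ.le_apply (x := k))
      linarith)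

private lemma Gh_q (hpq : cle p q) : Gh e p q q = e p q := by
  rw [Gh, ePlus, if_pos rfl, add_zero]

private lemma q_mem_Kset (hpq : cle p q) : q ∈ Kset e p q :=
  Kmem_of_max hpq (cle_refl q) (le_of_eq (Gh_q hpq).symm)

/-- The hard lemma: asymptotic maximizers are maximizers. -/
private lemma HL (hE : IsE e) (hmcl : MCL e) (hpq : cle p q) (hst : p.2 < q.2)
    {Qs : ℝ × ℝ} (hK : Qs ∈ Kset e p q) : e p q ≤ Gh e p q Qs := by
  obtain ⟨h1, h2⟩ := Kset_orderInt hK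
  rcases eq_or_lt_of_le (cle_le2 h1) with hs | hs
  · -- Qs is the left endpoint p
    have hQp : p = Qs := cle_same_level h1 hs.ge
    rw [← hQp, Gh]
    exact le_of_eq (ePlus_left hmcl hpq hst)
  rcases eq_or_lt_of_le (cle_le2 h2) with ht | ht
  · -- Qs is the right endpoint q
    have hQq : Qs = q := cle_same_level h2 ht.ge
    rw [hQq, Gh_q hpq]
  -- interior case
  by_contra hcon
  push_neg at hcon
  set ε' : ℝ := (e p q - Gh e p q Qs) / 2 with hε'
  have hε'0 : 0 < ε' := by rw [hε']; linarith
  -- the collapsing scale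
  have hgap1 : 0 < (Qs.2 - p.2) / 2 := by linarith
  have hgap2 : 0 < (q.2 - Qs.2) / 2 := by linarith
  set c : ℕ → ℝ := fun k =>
    min (min ((Qs.2 - p.2) / 2) ((q.2 - Qs.2) / 2)) (1 / ((k : ℝ) + 1)) with hcdef
  have hc0 : ∀ k, 0 < c k := fun k =>
    lt_min (lt_min hgap1 hgap2) (one_div_succ_pos k)
  have hcle1 : ∀ k, c k ≤ (Qs.2 - p.2) / 2 :=
    fun k => (min_le_left _ _).trans (min_le_left _ _)
  have hcle2 : ∀ k, c k ≤ (q.2 - Qs.2) / 2 :=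
    fun k => (min_le_left _ _).trans (min_le_right _ _)
  have hcle3 : ∀ k, c k ≤ 1 / ((k : ℝ) + 1) := fun k => min_le_right _ _
  have hcto : Filter.Tendsto c Filter.atTop (nhds 0) := by
    apply squeeze_zero (fun k => (hc0 k).le) hcle3
    exact tendsto_one_div_add_atTop_nhds_zero_nat
  -- a sequence of levels collapsing onto Qs.2
  have hstep : ∀ k : ℕ, ∃ u v : ℝ × ℝ, cle p u ∧ cle u Qs ∧ u.2 = Qs.2 - c k ∧
      cle Qs v ∧ cle v q ∧ v.2 = Qs.2 + c k ∧
      e p q < e p u + e u v + e v q + 1 / ((k : ℝ) + 1) := by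
    intro k
    have h1c := hc0 k
    have h2c := hcle1 k
    have h3c := hcle2 k
    exact HL_step hE hmcl hpq hK (l := Qs.2 - c k) (m := Qs.2 + c k)
      (by linarith) (by linarith) (by linarith) (by linarith) (one_div_succ_pos k)
  choose u v hu1 hu2 hu3 hv1 hv2 hv3 hval using hstep
  have hune : ∀ k, u k ≠ Qs := by
    intro k hh
    have := congrArg Prod.snd hh
    rw [hu3 k] at this
    linarith [hc0 k]
  have hvne : ∀ k, v k ≠ Qs := by
    intro k hh
    have := congrArg Prod.snd hh
    rw [hv3 k] at this
    linarith [hc0 k]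
  have hQsq : Qs ≠ q := by
    intro hh
    rw [hh] at ht
    exact lt_irrefl _ ht
  -- elementwise bounds
  have hA : ∀ k, e p (u k) + e Qs Qs ≤ e p Qs := by
    intro k
    have t1 := hE.triangle p (u k) Qs (hu1 k) (hu2 k)
    have t2 : e Qs Qs ≤ ePlus e (u k) Qs :=
      ePlus_le_elem hE (hu2 k) (Ne.symm (hune k)) (hune k)
    linarith
  have hB : ∀ k, e (v k) q ≤ ePlus e Qs q :=
    fun k => ePlus_le_elem hE (hv1 k) (hvne k) hQsq
  -- convergence of u and v to Qs
  have hudist : ∀ k, dist (u k) Qs ≤ c k := by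
    intro k
    rw [Prod.dist_eq]
    apply max_le
    · rw [Real.dist_eq]
      obtain ⟨a1, a2⟩ := cle_elim (hu2 k)
      rw [abs_le]
      rw [hu3 k] at a1 a2
      constructor <;> linarith
    · rw [Real.dist_eq, hu3 k]
      have harg : Qs.2 - c k - Qs.2 = -(c k) := by ring
      rw [harg, abs_neg, abs_of_pos (hc0 k)]
  have hvdist : ∀ k, dist (v k) Qs ≤ c k := by
    intro k
    rw [Prod.dist_eq]
    apply max_le
    · rw [Real.dist_eq]
      obtain ⟨a1, a2⟩ := cle_elim (hv1 k)
      rw [abs_le]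
      rw [hv3 k] at a1 a2
      constructor <;> linarith
    · rw [Real.dist_eq, hv3 k]
      have harg : Qs.2 + c k - Qs.2 = c k := by ring
      rw [harg, abs_of_pos (hc0 k)]
  have huconv : Filter.Tendsto u Filter.atTop (nhds Qs) := by
    rw [tendsto_iff_dist_tendsto_zero]
    exact squeeze_zero (fun k => dist_nonneg) hudist hcto
  have hvconv : Filter.Tendsto v Filter.atTop (nhds Qs) := by
    rw [tendsto_iff_dist_tendsto_zero]
    exact squeeze_zero (fun k => dist_nonneg) hvdist hcto
  -- pass to the limit
  have hev : ∀ᶠ k in Filter.atTop, e (u k) (v k) < e Qs Qs + ε' :=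
    usc_ev hE huconv hvconv hε'0
  obtain ⟨n0, hn0⟩ := exists_nat_one_div_lt hε'0
  obtain ⟨k, hk1, hk2⟩ := (hev.and (Filter.eventually_ge_atTop n0)).exists
  have hk3 : (1 : ℝ) / (k + 1) < ε' := by
    have := one_div_succ_le hk2
    linarith
  have := hval k
  have := hA k
  have := hB k
  have hGh : Gh e p q Qs = e p Qs + ePlus e Qs q := rfl
  -- e p q < (e p Qs - e Qs Qs) + (e Qs Qs + ε') + ePlus e Qs q + ε' = Gh + 2ε' = e p q
  have hfinal : e p q < Gh e p q Qs + 2 * ε' := by rw [hGh]; linarith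
  rw [hε'] at hfinal
  linarith

private lemma Kset_level_nonempty (hE : IsE e) (hmcl : MCL e) (hpq : cle p q)
    (hst : p.2 < q.2) {r : ℝ} (hr : r ∈ Set.Icc p.2 q.2) :
    ∃ z : ℝ, (z, r) ∈ Kset e p q := by
  rcases eq_or_lt_of_le hr.2 with ht | ht
  · -- r = q.2 : take q itself
    refine ⟨q.1, ?_⟩
    have : ((q.1 : ℝ), r) = q := by rw [ht]
    rw [this]
    exact q_mem_Kset hpq
  · have hwit : ∀ n : ℕ, ∃ w : ℝ, cle p (w, r) ∧ cle (w, r) q ∧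
        e p q - 1 / ((n : ℝ) + 1) < e p (w, r) + ePlus e (w, r) q :=
      fun n => mcl_witness hmcl hpq hr.1 ht (one_div_succ_pos n)
    choose w hw1 hw2 hw3 using hwit
    have hbd : ∀ n, w n ∈ Set.Icc (p.1 - (r - p.2)) (p.1 + (r - p.2)) := by
      intro n
      obtain ⟨a1, a2⟩ := cle_elim (hw1 n)
      simp only at a1 a2
      simp only [Set.mem_Icc]
      constructor <;> linarith
    obtain ⟨ws, hws, _⟩ := Kmem_limit_level hbd hw1 hw2 (fun n => hw3 n)
    exact ⟨ws, hws⟩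

/-- Propagation of maximizers to every level. -/
private lemma Kprop (hE : IsE e) (hmcl : MCL e) (hpq : cle p q) (hst : p.2 < q.2)
    {Q : ℝ × ℝ} (hK : Q ∈ Kset e p q) {l : ℝ} (hl : l ∈ Set.Icc p.2 q.2) :
    ∃ Q' ∈ Kset e p q, Q'.2 = l ∧ |Q'.1 - Q.1| ≤ |l - Q.2| := by
  obtain ⟨h1, h2⟩ := Kset_orderInt hK
  have hGh : e p q ≤ Gh e p q Q := HL hE hmcl hpq hst hK
  rcases lt_trichotomy l Q.2 with hlt | heq | hgt
  · -- propagate downwards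
    have hwit : ∀ n : ℕ, ∃ w : ℝ, cle p (w, l) ∧ cle (w, l) Q ∧
        e p Q - 1 / ((n : ℝ) + 1) < e p (w, l) + ePlus e (w, l) Q :=
      fun n => mcl_witness hmcl h1 hl.1 hlt (one_div_succ_pos n)
    choose w hw1 hw2 hw3 using hwit
    have hgh : ∀ n : ℕ, e p q - 1 / ((n : ℝ) + 1) < Gh e p q (w n, l) := by
      intro n
      have hsup : ePlus e (w n, l) Q + ePlus e Q q ≤ ePlus e (w n, l) q :=
        ePlus_superadd hE (hw2 n) h2
      have h3 := hw3 n
      have : Gh e p q Q = e p Q + ePlus e Q q := rfl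
      have hGG : Gh e p q (w n, l) = e p (w n, l) + ePlus e (w n, l) q := rfl
      rw [hGG]
      linarith
    have hbd : ∀ n, w n ∈ Set.Icc (p.1 - (l - p.2)) (p.1 + (l - p.2)) := by
      intro n
      obtain ⟨a1, a2⟩ := cle_elim (hw1 n)
      simp only at a1 a2
      simp only [Set.mem_Icc]
      constructor <;> linarith
    obtain ⟨ws, hws, φ, hφ, hc⟩ :=
      Kmem_limit_level hbd hw1 (fun n => cle_trans (hw2 n) h2) hgh
    refine ⟨(ws, l), hws, rfl, ?_⟩
    have hxb : ∀ k, |w (φ k) - Q.1| ≤ Q.2 - l := by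
      intro k
      obtain ⟨a1, a2⟩ := cle_elim (hw2 (φ k))
      simp only at a1 a2
      rw [abs_le]
      constructor <;> linarith
    have htend : Filter.Tendsto (fun k => |w (φ k) - Q.1|) Filter.atTop (nhds |ws - Q.1|) :=
      (continuous_abs.tendsto _).comp ((hc.sub tendsto_const_nhds))
    have := le_of_tendsto htend (Filter.Eventually.of_forall hxb)
    calc |((ws : ℝ), l).1 - Q.1| ≤ Q.2 - l := this
      _ ≤ |l - Q.2| := by rw [abs_sub_comm]; exact le_abs_self _
  · -- same level
    refine ⟨Q, hK, heq.symm, by simp [heq]⟩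
  · -- propagate upwards
    rcases eq_or_lt_of_le hl.2 with ht | ht
    · -- l = q.2 : take q
      refine ⟨q, q_mem_Kset hpq, ht.symm, ?_⟩
      obtain ⟨a1, a2⟩ := cle_elim h2
      subst ht
      rw [abs_le, abs_of_nonneg (by linarith : (0:ℝ) ≤ q.2 - Q.2)]
      constructor <;> linarith
    · have hwit : ∀ n : ℕ, ∃ w : ℝ, cle Q (w, l) ∧ cle (w, l) q ∧
          e Q q - 1 / ((n : ℝ) + 1) < e Q (w, l) + ePlus e (w, l) q :=
        fun n => mcl_witness hmcl h2 hgt.le ht (one_div_succ_pos n)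
      choose w hw1 hw2 hw3 using hwit
      have hgh : ∀ n : ℕ, e p q - 1 / ((n : ℝ) + 1) < Gh e p q (w n, l) := by
        intro n
        have htri : e p Q + ePlus e Q (w n, l) ≤ e p (w n, l) :=
          hE.triangle p Q (w n, l) h1 (hw1 n)
        have hE1v : e Q (w n, l) = e Q Q + ePlus e Q (w n, l) :=
          ePlus_left hmcl (hw1 n) hgt
        have hE1q : e Q q = e Q Q + ePlus e Q q :=
          ePlus_left hmcl h2 (lt_trans hgt ht)
        have h3 := hw3 n
        have hGG : Gh e p q (w n, l) = e p (w n, l) + ePlus e (w n, l) q := rfl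
        have hGQ : Gh e p q Q = e p Q + ePlus e Q q := rfl
        rw [hGG]
        linarith
      have hbd : ∀ n, w n ∈ Set.Icc (Q.1 - (l - Q.2)) (Q.1 + (l - Q.2)) := by
        intro n
        obtain ⟨a1, a2⟩ := cle_elim (hw1 n)
        simp only at a1 a2
        simp only [Set.mem_Icc]
        constructor <;> linarith
      obtain ⟨ws, hws, φ, hφ, hc⟩ :=
        Kmem_limit_level hbd (fun n => cle_trans h1 (hw1 n)) hw2 hgh
      refine ⟨(ws, l), hws, rfl, ?_⟩
      have hxb : ∀ k, |w (φ k) - Q.1| ≤ l - Q.2 := by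
        intro k
        obtain ⟨a1, a2⟩ := cle_elim (hw1 (φ k))
        simp only at a1 a2
        rw [abs_le]
        constructor <;> linarith
      have htend : Filter.Tendsto (fun k => |w (φ k) - Q.1|) Filter.atTop (nhds |ws - Q.1|) :=
        (continuous_abs.tendsto _).comp ((hc.sub tendsto_const_nhds))
      have := le_of_tendsto htend (Filter.Eventually.of_forall hxb)
      calc |((ws : ℝ), l).1 - Q.1| ≤ l - Q.2 := this
        _ ≤ |l - Q.2| := le_abs_self _

end stmt13aux5
/-- For `e ∈ 𝓓`, `u = (p,q) ∈ ℝ⁴_≤` and `r ∈ [s,t]`, the map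
`z ↦ e(p;(z,r)) + e((z,r)⁺;q)` on `{z : p ≤ (z,r) ≤ q}` attains its supremum, has a
rightmost maximizer `z_u(r)`, and `r ↦ z_u(r)` is continuous on `[s,t]`. -/
theorem stmt13 (J : ℝ → ℝ → ℝ≥0∞) (F : ℝ × ℝ → ℝ) (hJ : PropA2 J (fun γ => F (γ, 1)))
    (e : ℝ × ℝ → ℝ × ℝ → ℝ) (he : InD J F e) (p q : ℝ × ℝ) (hpq : cle p q) :
    ∃ zmax : ℝ → ℝ, ContinuousOn zmax (Icc p.2 q.2) ∧
      ∀ r ∈ Icc p.2 q.2,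
        cle p (zmax r, r) ∧ cle (zmax r, r) q ∧
        (∀ z : ℝ, cle p (z, r) → cle (z, r) q →
          e p (z, r) + ePlus e (z, r) q ≤ e p (zmax r, r) + ePlus e (zmax r, r) q) ∧
        (∀ z : ℝ, cle p (z, r) → cle (z, r) q →
          e p (z, r) + ePlus e (z, r) q = e p (zmax r, r) + ePlus e (zmax r, r) q →
          z ≤ zmax r) := by
  have hE := he.isE
  have hmcl := he.mcl
  rcases eq_or_lt_of_le (cle_le2 hpq) with hst | hst
  · -- degenerate case : p.2 = q.2, so p = q and the interval is a single point
    have hpq' : p = q := cle_same_level hpq hst.ge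
    refine ⟨fun _ => p.1, continuousOn_const, ?_⟩
    intro r hr
    have hr' : r = p.2 := le_antisymm (by rw [hst]; exact hr.2) hr.1
    have hP : ((p.1 : ℝ), r) = p := by rw [hr']
    have hzeq : ∀ z : ℝ, cle p (z, r) → z = p.1 := by
      intro z h1
      obtain ⟨a1, a2⟩ := cle_elim h1
      simp only at a1 a2
      rw [hr'] at a1 a2
      linarith
    refine ⟨by rw [hP]; exact cle_refl p, by rw [hP]; exact hpq, ?_, ?_⟩
    · intro z h1 _
      rw [hzeq z h1]
    · intro z h1 _ _
      rw [hzeq z h1]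
  · -- main case
    set Z : ℝ → ℝ := fun r => sSup {z : ℝ | ((z : ℝ), r) ∈ Kset e p q} with hZdef
    have hbdd : ∀ r : ℝ, BddAbove {z : ℝ | ((z : ℝ), r) ∈ Kset e p q} := by
      intro r
      refine ⟨p.1 + (r - p.2), ?_⟩
      rintro z hz
      obtain ⟨a1, a2⟩ := cle_elim (Kset_orderInt hz).1
      simp only at a1 a2
      linarith
    have hZmem : ∀ r ∈ Set.Icc p.2 q.2, ((Z r : ℝ), r) ∈ Kset e p q := by
      intro r hr
      obtain ⟨z0, hz0⟩ := Kset_level_nonempty hE hmcl hpq hst hr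
      have hcl : IsClosed {z : ℝ | ((z : ℝ), r) ∈ Kset e p q} := by
        have hcont : Continuous fun z : ℝ => ((z : ℝ), r) :=
          continuous_id.prodMk continuous_const
        exact (Kset_isClosed (e := e) (p := p) (q := q)).preimage hcont
      exact hcl.csSup_mem ⟨z0, hz0⟩ (hbdd r)
    have hLip : ∀ r ∈ Set.Icc p.2 q.2, ∀ r' ∈ Set.Icc p.2 q.2,
        Z r - Z r' ≤ |r - r'| := by
      intro r hr r' hr'
      obtain ⟨Q', hQ'K, hQ'2, hQ'x⟩ := Kprop hE hmcl hpq hst (hZmem r hr) (l := r') hr'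
      have hQeta : ((Q'.1 : ℝ), r') = Q' := by rw [← hQ'2]
      have hmem : Q'.1 ∈ {z : ℝ | ((z : ℝ), r') ∈ Kset e p q} := by
        show ((Q'.1 : ℝ), r') ∈ Kset e p q
        rw [hQeta]; exact hQ'K
      have hle : Q'.1 ≤ Z r' := le_csSup (hbdd r') hmem
      have habs : |Q'.1 - Z r| ≤ |r' - r| := by
        have : ((Z r : ℝ), r).1 = Z r := rfl
        rw [← this]
        have h2 : ((Z r : ℝ), r).2 = r := rfl
        rw [← h2] at hQ'x ⊢
        exact hQ'x
      rw [abs_le] at habs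
      rw [abs_sub_comm] at habs
      have := le_abs_self (r - r')
      have := neg_abs_le (r - r')
      obtain ⟨hb1, hb2⟩ := habs
      linarith
    refine ⟨Z, ?_, ?_⟩
    · -- continuity via the 1-Lipschitz bound
      have : LipschitzOnWith 1 Z (Set.Icc p.2 q.2) := by
        apply LipschitzOnWith.of_dist_le_mul
        intro x hx y hy
        rw [Real.dist_eq, Real.dist_eq]
        have h1 := hLip x hx y hy
        have h2 := hLip y hy x hx
        rw [abs_sub_comm y x] at h2
        simp only [NNReal.coe_one, one_mul]
        rw [abs_le]
        constructor <;> linarith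
      exact this.continuousOn
    · intro r hr
      have hK := hZmem r hr
      obtain ⟨h1, h2⟩ := Kset_orderInt hK
      have hHL : e p q ≤ Gh e p q ((Z r : ℝ), r) := HL hE hmcl hpq hst hK
      refine ⟨h1, h2, ?_, ?_⟩
      · intro z hz1 hz2
        have ha : Gh e p q ((z : ℝ), r) ≤ e p q := Ghat_le_M hE hz1 hz2
        exact ha.trans hHL
      · intro z hz1 hz2 heq
        have hzK : ((z : ℝ), r) ∈ Kset e p q := by
          apply Kmem_of_max hz1 hz2
          calc e p q ≤ Gh e p q ((Z r : ℝ), r) := hHL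
            _ = Gh e p q ((z : ℝ), r) := heq.symm
        exact le_csSup (hbdd r) hzK

end
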